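/- Fix reals η ∈ (0, 1) and δ ∈ (0, 1), and let s = 1/(1 + exp(−δ)). For β > 0, define σ_β(t) = 1/(1 + exp(−β·t)), p(β) = (s − 1/2 − 1/β)/(s − σ_β(−1)), and q(β) = ( p(β)·(σ_β(η) − 1/2) − 1/β ) / ( 1/2 − σ_β(−1) ). Then, as β → ∞, ( p(β)·(1 − η) + q(β) ) / ( δ·(1 − p(β)) ) → (2 − η)·(2s − 1)/δ, which equals (2 − η)·tanh(δ/2)/δ. -/

import Mathlib

open Filter

noncomputable def sigma (β t : ℝ) : ℝ := 1 / (1 + Real.exp (-(β * t)))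

theorem copeland_lower_bound_limit (η δ : ℝ) (hη : η ∈ Set.Ioo (0:ℝ) 1)
    (hδ : δ ∈ Set.Ioo (0:ℝ) 1) :
    let s : ℝ := 1 / (1 + Real.exp (-δ))
    let p : ℝ → ℝ := fun β => (s - 1/2 - 1/β) / (s - sigma β (-1))
    let q : ℝ → ℝ := fun β => (p β * (sigma β η - 1/2) - 1/β) / (1/2 - sigma β (-1))
    Tendsto (fun β => (p β * (1 - η) + q β) / (δ * (1 - p β)))
      atTop (nhds ((2 - η) * (2 * s - 1) / δ)) ∧
    (2 - η) * (2 * s - 1) / δ = (2 - η) * Real.tanh (δ / 2) / δ := by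
  obtain ⟨hη0, hη1⟩ := hη
  obtain ⟨hδ0, hδ1⟩ := hδ
  intro s p q
  have hE : (0:ℝ) < Real.exp (-δ) := Real.exp_pos _
  have hEd : (0:ℝ) < 1 + Real.exp (-δ) := by linarith
  have hs_pos : 0 < s := by
    show 0 < 1 / (1 + Real.exp (-δ)); positivity
  have hs_half : 1/2 < s := by
    show 1/2 < 1 / (1 + Real.exp (-δ))
    rw [div_lt_div_iff₀ (by norm_num) hEd]
    have : Real.exp (-δ) < 1 := by
      rw [Real.exp_lt_one_iff]; linarith
    linarith
  -- limits of components
  have h1 : Tendsto (fun β : ℝ => sigma β (-1)) atTop (nhds 0) := by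
    have h : Tendsto (fun β : ℝ => 1 + Real.exp β) atTop atTop :=
      tendsto_atTop_add_const_left _ 1 Real.tendsto_exp_atTop
    have := h.inv_tendsto_atTop
    simpa [sigma, one_div, Function.comp, Pi.inv_def] using this
  have h2 : Tendsto (fun β : ℝ => sigma β η) atTop (nhds 1) := by
    have hb : Tendsto (fun β : ℝ => -(β * η)) atTop atBot := by
      have : Tendsto (fun β : ℝ => β * η) atTop atTop :=
        Tendsto.atTop_mul_const hη0 tendsto_id
      exact tendsto_neg_atBot_iff.mpr this
    have hexp : Tendsto (fun β : ℝ => Real.exp (-(β * η))) atTop (nhds 0) :=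
      Real.tendsto_exp_atBot.comp hb
    have : Tendsto (fun β : ℝ => 1 / (1 + Real.exp (-(β * η)))) atTop
        (nhds (1 / (1 + 0))) :=
      tendsto_const_nhds.div (tendsto_const_nhds.add hexp) (by norm_num)
    simpa [sigma] using this
  have h3 : Tendsto (fun β : ℝ => 1 / β) atTop (nhds 0) := by
    simpa [one_div] using tendsto_inv_atTop_zero
  have hp : Tendsto p atTop (nhds ((s - 1/2) / s)) := by
    have := Tendsto.div
      ((tendsto_const_nhds : Tendsto (fun _ : ℝ => s - 1/2) atTop (nhds (s - 1/2))).sub h3)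
      ((tendsto_const_nhds : Tendsto (fun _ : ℝ => s) atTop (nhds s)).sub h1)
      (by simpa using hs_pos.ne')
    simpa [p, Pi.div_def] using this
  have hq : Tendsto q atTop (nhds ((s - 1/2) / s * (1 - 1/2) / (1/2))) := by
    have := Tendsto.div
      (((hp.mul (h2.sub (tendsto_const_nhds : Tendsto (fun _ : ℝ => (1:ℝ)/2) atTop (nhds (1/2))))).sub h3))
      (((tendsto_const_nhds : Tendsto (fun _ : ℝ => (1:ℝ)/2) atTop (nhds (1/2))).sub h1))
      (by norm_num)
    simpa [q, mul_comm, Pi.div_def] using this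
  have hpl : (s - 1/2) / s < 1 := by
    rw [div_lt_one hs_pos]; linarith
  have hfinal : Tendsto (fun β => (p β * (1 - η) + q β) / (δ * (1 - p β)))
      atTop (nhds (((s - 1/2) / s * (1 - η) + (s - 1/2) / s * (1 - 1/2) / (1/2)) /
        (δ * (1 - (s - 1/2) / s)))) := by
    refine ((hp.mul tendsto_const_nhds).add hq).div
      (tendsto_const_nhds.mul (tendsto_const_nhds.sub hp)) ?_
    have : 0 < δ * (1 - (s - 1/2) / s) := by
      apply mul_pos hδ0; linarith
    exact this.ne'
  have heq : ((s - 1/2) / s * (1 - η) + (s - 1/2) / s * (1 - 1/2) / (1/2)) /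
        (δ * (1 - (s - 1/2) / s)) = (2 - η) * (2 * s - 1) / δ := by
    have hs0 : s ≠ 0 := hs_pos.ne'
    have h1p : 1 - (s - 1/2) / s = (1/2) / s := by field_simp; ring
    rw [h1p]
    field_simp
    ring
  constructor
  · rwa [heq] at hfinal
  · have key : 2 * s - 1 = Real.tanh (δ/2) := by
      have h4 : Real.exp (-δ) = (Real.exp (δ/2))⁻¹ * (Real.exp (δ/2))⁻¹ := by
        rw [← mul_inv, ← Real.exp_add, ← Real.exp_neg]; ring_nf
      have h5 : Real.exp (-(δ/2)) = (Real.exp (δ/2))⁻¹ := Real.exp_neg _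
      have hne : Real.exp (δ/2) ≠ 0 := (Real.exp_pos _).ne'
      have hs : s = 1 / (1 + Real.exp (-δ)) := rfl
      rw [Real.tanh_eq_sinh_div_cosh, Real.sinh_eq, Real.cosh_eq, hs, h4, h5]
      have hpos : (0:ℝ) < 1 + (Real.exp (δ/2))⁻¹ * (Real.exp (δ/2))⁻¹ := by positivity
      have hpos2 : (0:ℝ) < Real.exp (δ/2) + (Real.exp (δ/2))⁻¹ := by positivity
      field_simp
      ring
    rw [key]
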